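/- Let J ⊆ ℝ be an open interval and let W : ℂ × ℝ → ℂ be a function of (β, α) such that on an open set containing the relevant points: W is jointly differentiable, the partial derivatives ∂W/∂β (complex derivative in β) and ∂W/∂α (real derivative in α) exist and satisfy (1 − 3·i·α·β)·∂W/∂β(β,α) − 9·i·α²·∂W/∂α(β,α) − (3·i·α + β) = 0. Suppose β̃ : J → ℂ is differentiable and satisfies ∂W/∂β(β̃(α), α) = 0 for all α ∈ J, and define w : J → ℂ by w(α) = W(β̃(α), α). Then w is differentiable on J and 9·i·α²·w'(α) + 3·i·α + β̃(α) = 0 for all α ∈ J. -/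

import Mathlib

/-- If `W(β, α)` satisfies, on an open set `U` containing the points `(β̃ α, α)` for
`α` in the open interval `(a, b)`, the equation
`(1 - 3iαβ) ∂W/∂β - 9iα² ∂W/∂α - (3iα + β) = 0`
(with `W` jointly differentiable and both partial derivatives existing on `U`),
and if `β̃` is differentiable with `∂W/∂β (β̃ α, α) = 0` for `α ∈ (a, b)`, then
`w(α) = W(β̃ α, α)` is differentiable on `(a, b)` and satisfies
`9iα² w'(α) + 3iα + β̃ α = 0`. -/
theorem stationary_action_equation (a b : ℝ) (W : ℂ → ℝ → ℂ)
    (U : Set (ℂ × ℝ)) (hU : IsOpen U)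
    (βt : ℝ → ℂ) (hmem : ∀ α ∈ Set.Ioo a b, (βt α, α) ∈ U)
    (hWjoint : ∀ p ∈ U, DifferentiableAt ℝ (fun q : ℂ × ℝ => W q.1 q.2) p)
    (hWβ : ∀ p ∈ U, DifferentiableAt ℂ (fun z : ℂ => W z p.2) p.1)
    (hWα : ∀ p ∈ U, DifferentiableAt ℝ (fun t : ℝ => W p.1 t) p.2)
    (hPDE : ∀ p ∈ U,
      (1 - 3 * Complex.I * p.2 * p.1) * deriv (fun z : ℂ => W z p.2) p.1 -
        9 * Complex.I * (p.2 : ℂ) ^ 2 * deriv (fun t : ℝ => W p.1 t) p.2 -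
        (3 * Complex.I * p.2 + p.1) = 0)
    (hβt : ∀ α ∈ Set.Ioo a b, DifferentiableAt ℝ βt α)
    (hstat : ∀ α ∈ Set.Ioo a b, deriv (fun z : ℂ => W z α) (βt α) = 0) :
    ∀ α ∈ Set.Ioo a b, ∃ w' : ℂ,
      HasDerivAt (fun t : ℝ => W (βt t) t) w' α ∧
      9 * Complex.I * (α : ℂ) ^ 2 * w' + 3 * Complex.I * α + βt α = 0 := by
  intro α hα
  have hpU : ((βt α, α) : ℂ × ℝ) ∈ U := hmem α hα
  have hf : HasFDerivAt (fun q : ℂ × ℝ => W q.1 q.2)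
      (fderiv ℝ (fun q : ℂ × ℝ => W q.1 q.2) (βt α, α)) (βt α, α) :=
    (hWjoint _ hpU).hasFDerivAt
  set L := fderiv ℝ (fun q : ℂ × ℝ => W q.1 q.2) (βt α, α) with hLdef
  set dα := deriv (fun t : ℝ => W (βt α) t) α with hdα
  -- partial derivative in β vanishes
  have h1 : ∀ d : ℂ, L (d, 0) = 0 := by
    intro d
    have hg : HasFDerivAt (fun z : ℂ => ((z, α) : ℂ × ℝ))
        (ContinuousLinearMap.inl ℝ ℂ ℝ) (βt α) :=
      HasFDerivAt.prodMk (hasFDerivAt_id _) (hasFDerivAt_const _ _)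
    have hcomp : HasFDerivAt (fun z : ℂ => W z α)
        (L.comp (ContinuousLinearMap.inl ℝ ℂ ℝ)) (βt α) := by
      exact HasFDerivAt.comp (βt α) hf hg
    have hd : HasDerivAt (fun z : ℂ => W z α) 0 (βt α) := by
      have := (hWβ (βt α, α) hpU).hasDerivAt
      simpa [hstat α hα] using this
    have h0 : HasFDerivAt (fun z : ℂ => W z α)
        (((1 : ℂ →L[ℂ] ℂ).smulRight (0 : ℂ)).restrictScalars ℝ) (βt α) :=
      (hd.hasFDerivAt).restrictScalars ℝ
    have := hcomp.unique h0
    have := congrArg (fun T : ℂ →L[ℝ] ℂ => T d) this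
    simpa using this
  -- partial derivative in α
  have h2 : L (0, 1) = dα := by
    have hg : HasFDerivAt (fun t : ℝ => ((βt α, t) : ℂ × ℝ))
        (ContinuousLinearMap.inr ℝ ℂ ℝ) α :=
      HasFDerivAt.prodMk (hasFDerivAt_const _ _) (hasFDerivAt_id _)
    have hcomp : HasFDerivAt (fun t : ℝ => W (βt α) t)
        (L.comp (ContinuousLinearMap.inr ℝ ℂ ℝ)) α := by
      exact HasFDerivAt.comp α hf hg
    have hd : HasDerivAt (fun t : ℝ => W (βt α) t) dα α :=
      (hWα (βt α, α) hpU).hasDerivAt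
    have := hcomp.unique hd.hasFDerivAt
    have := congrArg (fun T : ℝ →L[ℝ] ℂ => T 1) this
    simpa using this
  -- chain rule
  have hinner : HasDerivAt (fun t : ℝ => ((βt t, t) : ℂ × ℝ))
      (deriv βt α, 1) α :=
    HasDerivAt.prodMk ((hβt α hα).hasDerivAt) (hasDerivAt_id α)
  have hw : HasDerivAt (fun t : ℝ => W (βt t) t) (L (deriv βt α, 1)) α :=
    by
    exact HasFDerivAt.comp_hasDerivAt_of_eq α hf hinner rfl
  have hval : L (deriv βt α, 1) = dα := by
    have : ((deriv βt α, 1) : ℂ × ℝ) = (deriv βt α, 0) + (0, 1) := by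
      simp [Prod.ext_iff]
    rw [this, map_add, h1, h2, zero_add]
  rw [hval] at hw
  refine ⟨dα, hw, ?_⟩
  have hP := hPDE (βt α, α) hpU
  simp only [hstat α hα] at hP
  have hP' : -(9 * Complex.I * (α : ℂ) ^ 2 * dα) - (3 * Complex.I * α + βt α) = 0 := by
    simpa [hdα] using hP
  linear_combination -hP'
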